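/- Let R ∈ SO(d) with R ≠ I, let σ = ‖log R‖₂ ∈ (0, π] be the largest rotation angle of R, and let U ∈ ℝ^{d×2} satisfy UᵀU = I₂ and Uᵀ(log R)U = σ·A₂, where A₂ = [[0,−1],[1,0]]. Then for every x ∈ S^{d-1} with Rx ≠ x, ⟨ (Rx − x)/‖Rx − x‖ , R·U A₂ Uᵀ x ⟩ ≥ ‖U A₂ Uᵀ x‖² · cos(σ/2). -/

import Mathlib

open MeasureTheory Matrix Real
notation "⟪" x ", " y "⟫_ℝ" => @inner ℝ _ _ x y

noncomputable def frobNorm {d : ℕ} (A : Matrix (Fin d) (Fin d) ℝ) : ℝ :=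
  Real.sqrt (∑ i, ∑ j, A i j ^ 2)

noncomputable def nuclearNorm {d : ℕ} (A : Matrix (Fin d) (Fin d) ℝ) : ℝ :=
  ∑ i, Real.sqrt ((Matrix.isHermitian_conjTranspose_mul_self A).eigenvalues i)

/-- `μ` is the uniform (rotation-invariant) probability distribution on the unit
sphere `S^{d-1} ⊂ ℝ^d`. -/
def IsUniformOnSphere {d : ℕ} (μ : Measure (EuclideanSpace ℝ (Fin d))) : Prop :=
  IsProbabilityMeasure μ ∧ (∀ᵐ x ∂μ, ‖x‖ = 1) ∧
  ∀ Q : Matrix (Fin d) (Fin d) ℝ, Qᵀ * Q = 1 →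
    Measure.map (fun x => Matrix.toEuclideanLin Q x) μ = μ

/-- The Beta function. -/
noncomputable def Beta (m n : ℝ) : ℝ := Real.Gamma m * Real.Gamma n / Real.Gamma (m + n)

noncomputable def ptilde (d : ℕ) : ℝ :=
  (1 + Beta ((d : ℝ) - 1) (1/2) / Beta (((d : ℝ) - 1)/2) (1/2))⁻¹

def A2 : Matrix (Fin 2) (Fin 2) ℝ := !![0, -1; 1, 0]

open scoped Nat
lemma exp_mulVec_eigen {d : ℕ} (L : Matrix (Fin d) (Fin d) ℝ) (v : Fin d → ℝ) (lam : ℝ)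
    (hlam : 0 ≤ lam) (hv : L *ᵥ (L *ᵥ v) = (-lam) • v) :
    (NormedSpace.exp L) *ᵥ v =
      Real.cos (Real.sqrt lam) • v +
        (∑' k : ℕ, (-lam) ^ k / (2 * k + 1)!) • (L *ᵥ v) := by
  letI : SeminormedRing (Matrix (Fin d) (Fin d) ℝ) := Matrix.linftyOpSemiNormedRing
  letI : NormedRing (Matrix (Fin d) (Fin d) ℝ) := Matrix.linftyOpNormedRing
  letI : NormedAlgebra ℝ (Matrix (Fin d) (Fin d) ℝ) := Matrix.linftyOpNormedAlgebra
  have key : ∀ k : ℕ, L ^ (2 * k) *ᵥ v = ((-lam) ^ k) • v ∧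
      L ^ (2 * k + 1) *ᵥ v = ((-lam) ^ k) • (L *ᵥ v) := by
    intro k
    induction k with
    | zero => simp [Matrix.one_mulVec]
    | succ n ih =>
      obtain ⟨he, ho⟩ := ih
      have h1 : L ^ (2 * (n + 1)) *ᵥ v = ((-lam) ^ (n + 1)) • v := by
        have h2 : (2 * (n + 1)) = (2 * n + 1) + 1 := by ring
        rw [h2, pow_succ', ← Matrix.mulVec_mulVec, ho, Matrix.mulVec_smul, hv,
          smul_smul, ← pow_succ]
      refine ⟨h1, ?_⟩
      rw [pow_succ', ← Matrix.mulVec_mulVec, h1, Matrix.mulVec_smul]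
  have hodd_sc : Summable (fun k : ℕ => (-lam) ^ k / (2 * k + 1)!) := by
    refine Summable.of_norm_bounded (Real.summable_pow_div_factorial lam) ?_
    intro k
    rw [Real.norm_eq_abs, abs_div, abs_pow, abs_neg, abs_of_nonneg hlam,
      abs_of_nonneg (by positivity : (0:ℝ) ≤ ((2 * k + 1)! : ℝ))]
    gcongr
    all_goals first
      | exact pow_nonneg hlam _
      | positivity
      | (exact_mod_cast Nat.factorial_le (by omega))
      | omega
  have hcos : HasSum (fun k : ℕ => (((2 * k)! : ℝ)⁻¹ * (-lam) ^ k)) (Real.cos (Real.sqrt lam)) := by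
    have h := Real.hasSum_cos (Real.sqrt lam)
    have heq : (fun k : ℕ => (-1 : ℝ) ^ k * (Real.sqrt lam) ^ (2 * k) / ((2 * k)! : ℝ)) =
        fun k : ℕ => (((2 * k)! : ℝ)⁻¹ * (-lam) ^ k) := by
      funext k
      rw [pow_mul, Real.sq_sqrt hlam, neg_pow lam]
      ring
    rwa [heq] at h
  have hmain : HasSum (fun n : ℕ => ((n ! : ℝ)⁻¹) • (L ^ n *ᵥ v))
      (Real.cos (Real.sqrt lam) • v + (∑' k : ℕ, (-lam) ^ k / (2 * k + 1)!) • (L *ᵥ v)) := by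
    refine HasSum.even_add_odd ?_ ?_
    · have h := hcos.smul_const v
      have heq : (fun k : ℕ => (((2 * k)! : ℝ)⁻¹ * (-lam) ^ k) • v) =
          fun k : ℕ => (((2 * k)! : ℝ)⁻¹) • (L ^ (2 * k) *ᵥ v) := by
        funext k; rw [(key k).1, smul_smul]
      rwa [heq] at h
    · have h := hodd_sc.hasSum.smul_const (L *ᵥ v)
      have heq : (fun k : ℕ => ((-lam) ^ k / (2 * k + 1)!) • (L *ᵥ v)) =
          fun k : ℕ => (((2 * k + 1)! : ℝ)⁻¹) • (L ^ (2 * k + 1) *ᵥ v) := by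
        funext k; rw [(key k).2, smul_smul, div_eq_inv_mul]
      rwa [heq] at h
  have hexp : HasSum (fun n : ℕ => ((n ! : ℝ)⁻¹) • L ^ n) (NormedSpace.exp L) :=
    NormedSpace.exp_series_hasSum_exp' L
  let ψ : Matrix (Fin d) (Fin d) ℝ →ₗ[ℝ] (Fin d → ℝ) :=
    { toFun := fun M => M *ᵥ v
      map_add' := fun A B => Matrix.add_mulVec A B v
      map_smul' := fun c A => Matrix.smul_mulVec c A v }
  have happ := (LinearMap.toContinuousLinearMap ψ).hasSum hexp
  have happ' : HasSum (fun n : ℕ => ((n ! : ℝ)⁻¹) • (L ^ n *ᵥ v)) ((NormedSpace.exp L) *ᵥ v) := by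
    have hψ : ∀ M : Matrix (Fin d) (Fin d) ℝ, (LinearMap.toContinuousLinearMap ψ) M = M *ᵥ v :=
      fun M => rfl
    simpa [hψ, Matrix.smul_mulVec] using happ
  exact happ'.unique hmain
lemma euclid_norm_sq {d : ℕ} (z : Fin d → ℝ) :
    ‖(WithLp.equiv 2 (Fin d → ℝ)).symm z‖ ^ 2 = z ⬝ᵥ z := by
  rw [EuclideanSpace.norm_eq, Real.sq_sqrt (by positivity)]
  simp [dotProduct, sq_abs, pow_two]

lemma euclid_inner_eq {d : ℕ} (a b : Fin d → ℝ) :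
    ⟪(WithLp.equiv 2 (Fin d → ℝ)).symm a, (WithLp.equiv 2 (Fin d → ℝ)).symm b⟫_ℝ = a ⬝ᵥ b := by
  simp [PiLp.inner_apply, dotProduct, mul_comm]

lemma hA2sq : A2 * A2 = (-1 : Matrix (Fin 2) (Fin 2) ℝ) := by
  ext i j
  fin_cases i <;> fin_cases j <;>
    simp [A2, Matrix.mul_apply, Fin.sum_univ_two]

lemma hA2t : A2ᵀ = -A2 := by
  ext i j
  fin_cases i <;> fin_cases j <;> simp [A2]

lemma LU_eq {d : ℕ} (L : Matrix (Fin d) (Fin d) ℝ) (σ : ℝ) (hσ0 : 0 ≤ σ)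
    (hL : Lᵀ = -L)
    (hnorm : ∀ x : EuclideanSpace ℝ (Fin d), ‖Matrix.toEuclideanLin L x‖ ≤ σ * ‖x‖)
    (U : Matrix (Fin d) (Fin 2) ℝ) (hU : Uᵀ * U = 1) (hUL : Uᵀ * L * U = σ • A2) :
    L * U = σ • (U * A2) := by
  set M : Matrix (Fin d) (Fin 2) ℝ := L * U - σ • (U * A2) with hM
  have hULt : Uᵀ * Lᵀ * U = -(σ • A2) := by
    rw [hL]; rw [Matrix.mul_neg, Matrix.neg_mul, hUL]
  have h1 : (L * U)ᵀ * (U * A2) = σ • (1 : Matrix (Fin 2) (Fin 2) ℝ) := by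
    calc (L * U)ᵀ * (U * A2) = (Uᵀ * Lᵀ * U) * A2 := by
          rw [Matrix.transpose_mul]; simp only [Matrix.mul_assoc]
      _ = -(σ • (A2 * A2)) := by rw [hULt]; simp [Matrix.smul_mul, Matrix.mul_smul]
      _ = σ • (1 : Matrix (Fin 2) (Fin 2) ℝ) := by rw [hA2sq]; simp
  have h2 : (U * A2)ᵀ * (U * A2) = (1 : Matrix (Fin 2) (Fin 2) ℝ) := by
    calc (U * A2)ᵀ * (U * A2) = A2ᵀ * (Uᵀ * U) * A2 := by
          rw [Matrix.transpose_mul]; simp only [Matrix.mul_assoc]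
      _ = -(A2 * A2) := by rw [hU, hA2t]; simp
      _ = 1 := by rw [hA2sq]; simp
  have h3 : (U * A2)ᵀ * (L * U) = σ • (1 : Matrix (Fin 2) (Fin 2) ℝ) := by
    have := congrArg Matrix.transpose h1
    rwa [Matrix.transpose_mul, Matrix.transpose_transpose, Matrix.transpose_smul,
      Matrix.transpose_one] at this
  have hMM : Mᵀ * M = (L * U)ᵀ * (L * U) - (σ ^ 2) • (1 : Matrix (Fin 2) (Fin 2) ℝ) := by
    rw [hM]
    simp only [Matrix.transpose_sub, Matrix.transpose_smul, Matrix.sub_mul, Matrix.mul_sub,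
      Matrix.smul_mul, Matrix.mul_smul, smul_smul, h1, h2, h3]
    rw [← sq]
    abel_nf
    simp
  have hdot : ∀ j : Fin 2, ((L * U)ᵀ * (L * U)) j j ≤ σ ^ 2 := by
    intro j
    set u : Fin d → ℝ := fun i => U i j with hu
    have hUcol : u ⬝ᵥ u = 1 := by
      have h0 := congrFun (congrFun hU j) j
      simpa [Matrix.mul_apply, Matrix.one_apply, dotProduct, hu, mul_comm] using h0
    have h6 : ‖Matrix.toEuclideanLin L ((WithLp.equiv 2 (Fin d → ℝ)).symm u)‖ ^ 2
        = (L *ᵥ u) ⬝ᵥ (L *ᵥ u) := by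
      rw [Matrix.toEuclideanLin_apply]
      exact euclid_norm_sq (L *ᵥ u)
    have h7 : ‖((WithLp.equiv 2 (Fin d → ℝ)).symm u)‖ ^ 2 = 1 := by
      rw [euclid_norm_sq, hUcol]
    have h5 := hnorm ((WithLp.equiv 2 (Fin d → ℝ)).symm u)
    have h8 : (L *ᵥ u) ⬝ᵥ (L *ᵥ u) ≤ σ ^ 2 := by
      have h9 := pow_le_pow_left₀ (norm_nonneg _) h5 2
      rw [h6, mul_pow, h7] at h9
      simpa using h9
    have h10 : ((L * U)ᵀ * (L * U)) j j = (L *ᵥ u) ⬝ᵥ (L *ᵥ u) := by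
      simp [Matrix.mul_apply, Matrix.transpose_apply, Matrix.mulVec, dotProduct, hu,
        mul_comm]
    rw [h10]; exact h8
  have hM0 : M = 0 := by
    have hcolsum : ∀ j : Fin 2, ∑ i, M i j ^ 2 = 0 := by
      intro j
      have hd : (Mᵀ * M) j j = ∑ i, M i j ^ 2 := by
        simp [Matrix.mul_apply, Matrix.transpose_apply, pow_two]
      have hle : ∑ i, M i j ^ 2 ≤ 0 := by
        rw [← hd, hMM]
        have := hdot j
        simp only [Matrix.sub_apply, Matrix.smul_apply, Matrix.one_apply_eq, smul_eq_mul,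
          mul_one]
        linarith
      exact le_antisymm hle (Finset.sum_nonneg fun i _ => sq_nonneg _)
    ext i j
    have h11 := (Finset.sum_eq_zero_iff_of_nonneg
      (fun i (_ : i ∈ Finset.univ) => sq_nonneg (M i j))).mp (hcolsum j) i (Finset.mem_univ i)
    simpa using pow_eq_zero_iff (n := 2) (by norm_num) |>.mp h11
  exact sub_eq_zero.mp (hM ▸ hM0)

lemma core_inner {d : ℕ} (R L : Matrix (Fin d) (Fin d) ℝ) (hL : Lᵀ = -L)
    (hexp : R = NormedSpace.exp L) (σ : ℝ) (hσ0 : 0 ≤ σ) (hσπ : σ ≤ Real.pi)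
    (hnorm : ∀ y : EuclideanSpace ℝ (Fin d), ‖Matrix.toEuclideanLin L y‖ ≤ σ * ‖y‖)
    (x : EuclideanSpace ℝ (Fin d)) :
    Real.cos σ * ‖x‖ ^ 2 ≤
      (WithLp.equiv 2 (Fin d → ℝ) x) ⬝ᵥ (R *ᵥ (WithLp.equiv 2 (Fin d → ℝ) x)) := by
  classical
  set x' : Fin d → ℝ := WithLp.equiv 2 (Fin d → ℝ) x with hx'
  have hA : (Lᵀ * L).IsHermitian := Matrix.isHermitian_conjTranspose_mul_self L
  set b := hA.eigenvectorBasis with hb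
  set lam := hA.eigenvalues with hlam
  -- basic facts about eigenvectors
  have hbe : ∀ i, (Lᵀ * L) *ᵥ ⇑(b i) = lam i • ⇑(b i) := fun i =>
    hA.mulVec_eigenvectorBasis i
  have hb1 : ∀ i, (⇑(b i) : Fin d → ℝ) ⬝ᵥ ⇑(b i) = 1 := by
    intro i
    have h1 : ‖b i‖ = 1 := b.orthonormal.1 i
    have h2 : ‖(WithLp.equiv 2 (Fin d → ℝ)).symm (⇑(b i))‖ ^ 2 = ⇑(b i) ⬝ᵥ ⇑(b i) :=
      euclid_norm_sq _
    rw [show (WithLp.equiv 2 (Fin d → ℝ)).symm (⇑(b i)) = b i from rfl, h1] at h2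
    simpa using h2.symm
  have hlam_eq : ∀ i, lam i = (L *ᵥ ⇑(b i)) ⬝ᵥ (L *ᵥ ⇑(b i)) := by
    intro i
    have h1 := congrArg (fun w => (⇑(b i) : Fin d → ℝ) ⬝ᵥ w) (hbe i)
    simp only at h1
    rw [← Matrix.mulVec_mulVec, Matrix.dotProduct_mulVec, Matrix.vecMul_transpose,
      dotProduct_smul, hb1 i, smul_eq_mul, mul_one] at h1
    rw [← h1]
  have hlam_nonneg : ∀ i, 0 ≤ lam i := by
    intro i
    rw [hlam_eq i]
    exact Finset.sum_nonneg fun j _ => mul_self_nonneg _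
  have hlam_le : ∀ i, lam i ≤ σ ^ 2 := by
    intro i
    rw [hlam_eq i]
    have h5 := hnorm ((WithLp.equiv 2 (Fin d → ℝ)).symm (⇑(b i)))
    have h6 : ‖Matrix.toEuclideanLin L ((WithLp.equiv 2 (Fin d → ℝ)).symm (⇑(b i)))‖ ^ 2
        = (L *ᵥ ⇑(b i)) ⬝ᵥ (L *ᵥ ⇑(b i)) := by
      rw [Matrix.toEuclideanLin_apply]
      exact euclid_norm_sq (L *ᵥ ⇑(b i))
    have h7 : ‖((WithLp.equiv 2 (Fin d → ℝ)).symm (⇑(b i)))‖ = 1 := b.orthonormal.1 i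
    rw [h7, mul_one] at h5
    have h9 := pow_le_pow_left₀ (norm_nonneg _) h5 2
    rwa [h6] at h9
  -- eigen-relation for L ∘ L
  have hvv : ∀ i, L *ᵥ (L *ᵥ ⇑(b i)) = (-(lam i)) • ⇑(b i) := by
    intro i
    have h1 := hbe i
    rw [hL, Matrix.neg_mul, Matrix.neg_mulVec] at h1
    have h2 := congrArg Neg.neg h1
    rw [neg_neg] at h2
    rw [Matrix.mulVec_mulVec, h2, neg_smul]
  -- action of R and Rᵀ on eigenvectors
  have hRT : Rᵀ = NormedSpace.exp (-L) := by
    rw [hexp, ← Matrix.exp_transpose, hL]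
  have hsum_i : ∀ i, R *ᵥ ⇑(b i) + Rᵀ *ᵥ ⇑(b i) =
      (2 * Real.cos (Real.sqrt (lam i))) • ⇑(b i) := by
    intro i
    have h1 := exp_mulVec_eigen L (⇑(b i)) (lam i) (hlam_nonneg i) (hvv i)
    have hvv' : (-L) *ᵥ ((-L) *ᵥ ⇑(b i)) = (-(lam i)) • ⇑(b i) := by
      rw [Matrix.neg_mulVec, Matrix.neg_mulVec, Matrix.mulVec_neg, neg_neg]
      exact hvv i
    have h2 := exp_mulVec_eigen (-L) (⇑(b i)) (lam i) (hlam_nonneg i) hvv'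
    rw [← hexp] at h1
    rw [← hRT] at h2
    rw [h1, h2, Matrix.neg_mulVec, smul_neg, two_mul, add_smul]
    abel
  -- quadratic form computation
  have hdouble : 2 * (x' ⬝ᵥ (R *ᵥ x')) = x' ⬝ᵥ ((R + Rᵀ) *ᵥ x') := by
    rw [Matrix.add_mulVec, dotProduct_add]
    have : x' ⬝ᵥ (Rᵀ *ᵥ x') = x' ⬝ᵥ (R *ᵥ x') := by
      rw [Matrix.dotProduct_mulVec, Matrix.vecMul_transpose, dotProduct_comm]
    rw [this]; ring
  set y : EuclideanSpace ℝ (Fin d) := (WithLp.equiv 2 (Fin d → ℝ)).symm ((R + Rᵀ) *ᵥ x')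
    with hy
  have hxy : ⟪x, y⟫_ℝ = x' ⬝ᵥ ((R + Rᵀ) *ᵥ x') := by
    rw [hy, show x = (WithLp.equiv 2 (Fin d → ℝ)).symm x' from rfl]
    exact euclid_inner_eq _ _
  have hby : ∀ i, ⟪b i, y⟫_ℝ = (2 * Real.cos (Real.sqrt (lam i))) * ⟪b i, x⟫_ℝ := by
    intro i
    have h1 : ⟪b i, y⟫_ℝ = (⇑(b i) : Fin d → ℝ) ⬝ᵥ ((R + Rᵀ) *ᵥ x') := by
      rw [hy, show b i = (WithLp.equiv 2 (Fin d → ℝ)).symm (⇑(b i)) from rfl]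
      exact euclid_inner_eq _ _
    have h2 : (⇑(b i) : Fin d → ℝ) ⬝ᵥ ((R + Rᵀ) *ᵥ x') =
        ((R + Rᵀ)ᵀ *ᵥ ⇑(b i)) ⬝ᵥ x' := by
      rw [Matrix.dotProduct_mulVec, Matrix.mulVec_transpose]
    have h3 : (R + Rᵀ)ᵀ *ᵥ ⇑(b i) = (2 * Real.cos (Real.sqrt (lam i))) • ⇑(b i) := by
      rw [Matrix.transpose_add, Matrix.transpose_transpose, Matrix.add_mulVec, add_comm]
      exact hsum_i i
    have h4 : ⟪b i, x⟫_ℝ = (⇑(b i) : Fin d → ℝ) ⬝ᵥ x' := by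
      rw [show b i = (WithLp.equiv 2 (Fin d → ℝ)).symm (⇑(b i)) from rfl,
        show x = (WithLp.equiv 2 (Fin d → ℝ)).symm x' from rfl]
      exact euclid_inner_eq _ _
    rw [h1, h2, h3, smul_dotProduct, smul_eq_mul, h4]
  have hparseval := b.sum_inner_mul_inner x y
  have hparseval2 := b.sum_inner_mul_inner x x
  have hterm : ∀ i, 2 * Real.cos σ * (⟪x, b i⟫_ℝ * ⟪b i, x⟫_ℝ) ≤ ⟪x, b i⟫_ℝ * ⟪b i, y⟫_ℝ := by
    intro i
    rw [hby i]
    have hsq : 0 ≤ ⟪x, b i⟫_ℝ * ⟪b i, x⟫_ℝ := by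
      rw [real_inner_comm x (b i)]; exact mul_self_nonneg _
    have hcc : Real.cos σ ≤ Real.cos (Real.sqrt (lam i)) := by
      apply Real.cos_le_cos_of_nonneg_of_le_pi (Real.sqrt_nonneg _) hσπ
      calc Real.sqrt (lam i) ≤ Real.sqrt (σ ^ 2) := Real.sqrt_le_sqrt (hlam_le i)
        _ = σ := Real.sqrt_sq hσ0
    calc 2 * Real.cos σ * (⟪x, b i⟫_ℝ * ⟪b i, x⟫_ℝ)
        ≤ 2 * Real.cos (Real.sqrt (lam i)) * (⟪x, b i⟫_ℝ * ⟪b i, x⟫_ℝ) := by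
          apply mul_le_mul_of_nonneg_right _ hsq
          linarith
      _ = ⟪x, b i⟫_ℝ * ((2 * Real.cos (Real.sqrt (lam i))) * ⟪b i, x⟫_ℝ) := by ring
  have hfinal : 2 * Real.cos σ * ‖x‖ ^ 2 ≤ ⟪x, y⟫_ℝ := by
    calc 2 * Real.cos σ * ‖x‖ ^ 2 = 2 * Real.cos σ * ⟪x, x⟫_ℝ := by
          rw [real_inner_self_eq_norm_sq]
      _ = ∑ i, 2 * Real.cos σ * (⟪x, b i⟫_ℝ * ⟪b i, x⟫_ℝ) := by
          rw [← Finset.mul_sum, hparseval2]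
      _ ≤ ∑ i, ⟪x, b i⟫_ℝ * ⟪b i, y⟫_ℝ := Finset.sum_le_sum fun i _ => hterm i
      _ = ⟪x, y⟫_ℝ := hparseval
  rw [hxy, ← hdouble] at hfinal
  linarith

noncomputable def rot2 (θ : ℝ) : Matrix (Fin 2) (Fin 2) ℝ :=
  !![Real.cos θ, -Real.sin θ; Real.sin θ, Real.cos θ]

set_option maxHeartbeats 1000000

theorem stmt10 {d : ℕ} (R L : Matrix (Fin d) (Fin d) ℝ) (hR : Rᵀ * R = 1) (hdet : R.det = 1)
    (hRI : R ≠ 1) (hL : Lᵀ = -L) (hexp : R = NormedSpace.exp L)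
    (σ : ℝ) (hσ0 : 0 < σ) (hσπ : σ ≤ Real.pi)
    (hnorm : ∀ x : EuclideanSpace ℝ (Fin d), ‖Matrix.toEuclideanLin L x‖ ≤ σ * ‖x‖)
    (U : Matrix (Fin d) (Fin 2) ℝ) (hU : Uᵀ * U = 1) (hUL : Uᵀ * L * U = σ • A2)
    (x : EuclideanSpace ℝ (Fin d)) (hx : ‖x‖ = 1)
    (hfix : Matrix.toEuclideanLin R x ≠ x) :
    ‖Matrix.toEuclideanLin (U * A2 * Uᵀ) x‖ ^ 2 * Real.cos (σ / 2) ≤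
      ⟪‖Matrix.toEuclideanLin R x - x‖⁻¹ • (Matrix.toEuclideanLin R x - x),
        Matrix.toEuclideanLin (R * (U * A2 * Uᵀ)) x⟫_ℝ := by
  have hσ0' : (0:ℝ) ≤ σ := le_of_lt hσ0
  set x' : Fin d → ℝ := WithLp.equiv 2 (Fin d → ℝ) x with hx'
  set c : Fin 2 → ℝ := Uᵀ *ᵥ x' with hc
  set v : Fin d → ℝ := U *ᵥ (A2 *ᵥ c) with hv
  set q : ℝ := c ⬝ᵥ c with hq
  have hq0 : 0 ≤ q := Finset.sum_nonneg fun i _ => mul_self_nonneg _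
  have hLU := LU_eq L σ hσ0' hL hnorm U hU hUL
  have hLUv : ∀ w : Fin 2 → ℝ, L *ᵥ (U *ᵥ w) = σ • (U *ᵥ (A2 *ᵥ w)) := by
    intro w
    rw [Matrix.mulVec_mulVec, hLU, Matrix.smul_mulVec, ← Matrix.mulVec_mulVec]
  have hA2c : A2 *ᵥ (A2 *ᵥ c) = -c := by
    rw [Matrix.mulVec_mulVec, hA2sq, Matrix.neg_mulVec, Matrix.one_mulVec]
  have hLv : L *ᵥ v = (-σ) • (U *ᵥ c) := by
    rw [hv, hLUv, hA2c, Matrix.mulVec_neg, smul_neg, neg_smul]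
  have hLLv : L *ᵥ (L *ᵥ v) = (-(σ^2)) • v := by
    rw [hLv, Matrix.mulVec_smul, hLUv, smul_smul, hv]
    congr 1
    ring
  have hRv := exp_mulVec_eigen L v (σ^2) (sq_nonneg σ) hLLv
  rw [← hexp, Real.sqrt_sq hσ0'] at hRv
  set s : ℝ := ∑' k : ℕ, (-(σ^2)) ^ k / (2 * k + 1)! with hs
  have hsin : s * σ = Real.sin σ := by
    have h := Real.sin_eq_tsum σ
    have heq : (fun n : ℕ => (-1:ℝ)^n * σ^(2*n+1)/((2*n+1)! : ℝ)) =
        fun n : ℕ => ((-(σ^2))^n/((2*n+1)! : ℝ)) * σ := by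
      funext n
      rw [show (-(σ^2) : ℝ)^n = (-1)^n * σ^(2*n) by rw [neg_pow, pow_mul], pow_succ]
      ring
    rw [heq, tsum_mul_right] at h
    exact h.symm
  have hRv' : R *ᵥ v = Real.cos σ • v + (-(Real.sin σ)) • (U *ᵥ c) := by
    rw [hRv, hLv, smul_smul, ← hsin]
    congr 2
    ring
  have dUt : ∀ (a : Fin d → ℝ) (w : Fin 2 → ℝ), a ⬝ᵥ (U *ᵥ w) = (Uᵀ *ᵥ a) ⬝ᵥ w := by
    intro a w
    rw [Matrix.dotProduct_mulVec, ← Matrix.mulVec_transpose]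
  have hcA2 : c ⬝ᵥ (A2 *ᵥ c) = 0 := by
    simp [A2, Matrix.mulVec, dotProduct, Fin.sum_univ_two]
    ring
  have hA2norm : (A2 *ᵥ c) ⬝ᵥ (A2 *ᵥ c) = q := by
    simp [hq, A2, Matrix.mulVec, dotProduct, Fin.sum_univ_two]
    ring
  have hxv : x' ⬝ᵥ v = 0 := by
    rw [hv, dUt, ← hc, hcA2]
  have hxUc : x' ⬝ᵥ (U *ᵥ c) = q := by
    rw [dUt, ← hc, hq]
  have hvnorm : v ⬝ᵥ v = q := by
    conv_lhs => rw [hv]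
    rw [dUt, Matrix.mulVec_mulVec, hU, Matrix.one_mulVec, hA2norm]
  have hxRv : x' ⬝ᵥ (R *ᵥ v) = -(Real.sin σ) * q := by
    rw [hRv', dotProduct_add, dotProduct_smul, dotProduct_smul,
      hxv, hxUc]
    simp
  have hRR : ∀ a b : Fin d → ℝ, (R *ᵥ a) ⬝ᵥ (R *ᵥ b) = a ⬝ᵥ b := by
    intro a b
    rw [Matrix.dotProduct_mulVec, ← Matrix.mulVec_transpose, Matrix.mulVec_mulVec, hR,
      Matrix.one_mulVec]
  have hx1 : x' ⬝ᵥ x' = 1 := by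
    have h := euclid_norm_sq x'
    rw [show (WithLp.equiv 2 (Fin d → ℝ)).symm x' = x from rfl, hx] at h
    simpa using h.symm
  -- identify the goal quantities
  have e1 : Matrix.toEuclideanLin (U * A2 * Uᵀ) x = (WithLp.equiv 2 (Fin d → ℝ)).symm v := by
    rw [Matrix.toEuclideanLin_apply]
    congr 1
    rw [← Matrix.mulVec_mulVec, ← Matrix.mulVec_mulVec, ← (show x' = x.ofLp from rfl), ← hc, ← hv]
  have e2 : Matrix.toEuclideanLin (R * (U * A2 * Uᵀ)) x =
      (WithLp.equiv 2 (Fin d → ℝ)).symm (R *ᵥ v) := by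
    rw [Matrix.toEuclideanLin_apply]
    congr 1
    rw [← Matrix.mulVec_mulVec, ← Matrix.mulVec_mulVec, ← Matrix.mulVec_mulVec, ← (show x' = x.ofLp from rfl), ← hc,
      ← hv]
  have e3 : Matrix.toEuclideanLin R x - x = (WithLp.equiv 2 (Fin d → ℝ)).symm (R *ᵥ x' - x') :=
    rfl
  set n : ℝ := ‖Matrix.toEuclideanLin R x - x‖ with hn
  have hn_pos : 0 < n := norm_pos_iff.mpr (sub_ne_zero_of_ne hfix)
  have hn2 : n ^ 2 = 2 - 2 * (x' ⬝ᵥ (R *ᵥ x')) := by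
    rw [hn, e3, euclid_norm_sq, sub_dotProduct, dotProduct_sub,
      dotProduct_sub, hRR, hx1, dotProduct_comm (R *ᵥ x') x']
    ring
  have hcore := core_inner R L hL hexp σ hσ0' hσπ hnorm x
  rw [hx, ← hx'] at hcore
  have hsh : Real.sin (σ/2) ^ 2 = (1 - Real.cos σ)/2 := by
    have h := Real.sin_sq_eq_half_sub (σ/2)
    rw [show 2 * (σ/2) = σ by ring] at h
    rw [h]; ring
  have hsh0 : 0 ≤ Real.sin (σ/2) :=
    Real.sin_nonneg_of_nonneg_of_le_pi (by linarith) (by linarith)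
  have hch0 : 0 ≤ Real.cos (σ/2) :=
    Real.cos_nonneg_of_mem_Icc ⟨by linarith [Real.pi_pos], by linarith⟩
  have hn_le : n ≤ 2 * Real.sin (σ/2) := by
    nlinarith [hn2, hcore, hsh, hn_pos.le, hsh0]
  have hsin2 : Real.sin σ = 2 * Real.sin (σ/2) * Real.cos (σ/2) := by
    have h := Real.sin_two_mul (σ/2)
    rw [show 2 * (σ/2) = σ by ring] at h
    exact h
  -- compute both sides of the goal
  have hL1 : ‖Matrix.toEuclideanLin (U * A2 * Uᵀ) x‖ ^ 2 = q := by
    rw [e1, euclid_norm_sq, hvnorm]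
  have hR1 : ⟪‖Matrix.toEuclideanLin R x - x‖⁻¹ • (Matrix.toEuclideanLin R x - x),
      Matrix.toEuclideanLin (R * (U * A2 * Uᵀ)) x⟫_ℝ = n⁻¹ * (Real.sin σ * q) := by
    rw [e2, ← hn, real_inner_smul_left, e3, euclid_inner_eq, sub_dotProduct,
      hRR, hxv, hxRv]
    ring
  rw [hL1, hR1, inv_mul_eq_div, le_div_iff₀ hn_pos]
  nlinarith [mul_le_mul_of_nonneg_left hn_le (mul_nonneg hq0 hch0), hsin2]
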